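/- Let A, E be n×n complex matrices with E invertible and Hermitian, and let k be a positive integer with rank(A^k) = rank(A^(k+1)). (a) If X is an E-weighted core-EP inverse of A with exponent k (X·A^(k+1) = A^k, A·X^2 = X, (E·A·X)^* = E·A·X), then X^k is an E-weighted core inverse of A^k, i.e., X^k·(A^k)^2 = A^k, A^k·(X^k)^2 = X^k, and (E·A^k·X^k)^* = E·A^k·X^k. (b) Conversely, if Y is an E-weighted core inverse of A^k (Y·(A^k)^2 = A^k, A^k·Y^2 = Y, (E·A^k·Y)^* = E·A^k·Y), then A^(k-1)·Y is an E-weighted core-EP inverse of A with exponent k. -/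

import Mathlib

open Matrix

lemma exists_factor {n : ℕ} (M N : Matrix (Fin n) (Fin n) ℂ)
    (h : LinearMap.range N.mulVecLin ≤ LinearMap.range M.mulVecLin) :
    ∃ S : Matrix (Fin n) (Fin n) ℂ, M * S = N := by
  obtain ⟨r, hr⟩ := M.mulVecLin.rangeRestrict.exists_rightInverse_of_surjective
    M.mulVecLin.range_rangeRestrict
  set g : ((Fin n) → ℂ) →ₗ[ℂ] ((Fin n) → ℂ) :=
    r ∘ₗ N.mulVecLin.codRestrict (LinearMap.range M.mulVecLin) (fun x => h ⟨x, rfl⟩)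
  refine ⟨LinearMap.toMatrix' g, ?_⟩
  have hcomp : M.mulVecLin ∘ₗ g = N.mulVecLin := by
    refine LinearMap.ext fun x => ?_
    have : M.mulVecLin.rangeRestrict (r (⟨N.mulVecLin x, h ⟨x, rfl⟩⟩)) =
        ⟨N.mulVecLin x, h ⟨x, rfl⟩⟩ := by
      have := LinearMap.ext_iff.mp hr (⟨N.mulVecLin x, h ⟨x, rfl⟩⟩)
      exact this
    simpa [g, LinearMap.codRestrict] using congrArg Subtype.val this
  have := congrArg LinearMap.toMatrix' hcomp
  rwa [LinearMap.toMatrix'_comp, ← Matrix.toLin'_apply', LinearMap.toMatrix'_toLin',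
    ← Matrix.toLin'_apply', LinearMap.toMatrix'_toLin'] at this

theorem stmt_10 {n : ℕ} (A E : Matrix (Fin n) (Fin n) ℂ) (k : ℕ) (hk : 0 < k)
    (hE : IsUnit E) (hEherm : Eᴴ = E)
    (hrank : (A ^ k).rank = (A ^ (k + 1)).rank) :
    (∀ X : Matrix (Fin n) (Fin n) ℂ,
      X * A ^ (k + 1) = A ^ k → A * X ^ 2 = X → (E * A * X)ᴴ = E * A * X →
      X ^ k * (A ^ k) ^ 2 = A ^ k ∧ A ^ k * (X ^ k) ^ 2 = X ^ k ∧
      (E * A ^ k * X ^ k)ᴴ = E * A ^ k * X ^ k) ∧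
    (∀ Y : Matrix (Fin n) (Fin n) ℂ,
      Y * (A ^ k) ^ 2 = A ^ k → A ^ k * Y ^ 2 = Y → (E * A ^ k * Y)ᴴ = E * A ^ k * Y →
      A ^ (k - 1) * Y * A ^ (k + 1) = A ^ k ∧
      A * (A ^ (k - 1) * Y) ^ 2 = A ^ (k - 1) * Y ∧
      (E * A * (A ^ (k - 1) * Y))ᴴ = E * A * (A ^ (k - 1) * Y)) := by
  obtain ⟨m, rfl⟩ : ∃ m, k = m + 1 := ⟨k - 1, (Nat.succ_pred_eq_of_pos hk).symm⟩
  have pa : ∀ a b c : ℕ, a + b = c → A ^ a * A ^ b = A ^ c := fun a b c h => by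
    rw [← pow_add, h]
  -- existence of S with A^(m+2) * S = A^(m+1)
  have hle : LinearMap.range (A ^ (m + 1 + 1)).mulVecLin ≤
      LinearMap.range (A ^ (m + 1)).mulVecLin := by
    rw [pow_succ A (m + 1), Matrix.mulVecLin_mul]
    exact LinearMap.range_comp_le_range _ _
  have heq : LinearMap.range (A ^ (m + 1)).mulVecLin
      = LinearMap.range (A ^ (m + 1 + 1)).mulVecLin :=
    (Submodule.eq_of_le_of_finrank_le hle (le_of_eq hrank)).symm
  obtain ⟨S, hS⟩ := exists_factor (A ^ (m + 1 + 1)) (A ^ (m + 1)) (le_of_eq heq)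
  have hstep : ∀ t : ℕ, m + 1 ≤ t → A ^ (t + 1) * S = A ^ t := by
    intro t ht
    obtain ⟨j, rfl⟩ := Nat.exists_eq_add_of_le ht
    calc A ^ (m + 1 + j + 1) * S = A ^ j * (A ^ (m + 1 + 1) * S) := by
          rw [← mul_assoc, pa j (m + 1 + 1) (m + 1 + j + 1) (by omega)]
      _ = A ^ j * A ^ (m + 1) := by rw [hS]
      _ = A ^ (m + 1 + j) := pa j (m + 1) (m + 1 + j) (by omega)
  have hiter : ∀ (j t : ℕ), m + 1 ≤ t → A ^ (t + j) * S ^ j = A ^ t := by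
    intro j
    induction j with
    | zero => intro t _; simp
    | succ j ih =>
        intro t ht
        calc A ^ (t + (j + 1)) * S ^ (j + 1)
            = (A ^ (t + j + 1) * S) * S ^ j := by
              rw [pow_succ' S j, show t + (j + 1) = t + j + 1 by omega, mul_assoc]
          _ = A ^ (t + j) * S ^ j := by rw [hstep (t + j) (by omega)]
          _ = A ^ t := ih t ht
  constructor
  · -- part (a)
    intro X h1 h2 h3
    have hXA : ∀ j : ℕ, X ^ j * A ^ (m + 1 + j) = A ^ (m + 1) := by
      intro j
      induction j with
      | zero => simp
      | succ j ih =>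
          have e : X ^ (j + 1) * A ^ (m + 1 + (j + 1))
              = X ^ j * (X * A ^ (m + 1 + 1)) * A ^ j := by
            rw [pow_succ X j, show m + 1 + (j + 1) = (m + 1 + 1) + j by omega,
              pow_add A (m + 1 + 1) j]
            simp only [mul_assoc]
          calc X ^ (j + 1) * A ^ (m + 1 + (j + 1))
              = X ^ j * (X * A ^ (m + 1 + 1)) * A ^ j := e
            _ = X ^ j * A ^ (m + 1) * A ^ j := by rw [h1]
            _ = X ^ j * A ^ (m + 1 + j) := by rw [mul_assoc, pa (m + 1) j (m + 1 + j) rfl]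
            _ = A ^ (m + 1) := ih
    have hAX : ∀ j : ℕ, A ^ j * X ^ (j + 1) = X := by
      intro j
      induction j with
      | zero => simp
      | succ j ih =>
          have e : A ^ (j + 1) * X ^ (j + 1 + 1) = A ^ j * (A * X ^ 2) * X ^ j := by
            rw [pow_succ A j, show j + 1 + 1 = 2 + j by omega, pow_add X 2 j]
            simp only [mul_assoc]
          calc A ^ (j + 1) * X ^ (j + 1 + 1) = A ^ j * (A * X ^ 2) * X ^ j := e
            _ = A ^ j * X * X ^ j := by rw [h2]
            _ = A ^ j * X ^ (j + 1) := by rw [mul_assoc, ← pow_succ' X j]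
            _ = X := ih
    have hAXfix : ∀ j : ℕ, A ^ (j + 1) * X ^ (j + 1) = A * X := by
      intro j
      induction j with
      | zero => simp
      | succ j ih =>
          have e : A ^ (j + 1 + 1) * X ^ (j + 1 + 1)
              = A ^ (j + 1) * (A * X ^ 2) * X ^ j := by
            rw [pow_succ A (j + 1), show j + 1 + 1 = 2 + j by omega, pow_add X 2 j]
            simp only [mul_assoc]
          calc A ^ (j + 1 + 1) * X ^ (j + 1 + 1)
              = A ^ (j + 1) * (A * X ^ 2) * X ^ j := e
            _ = A ^ (j + 1) * X * X ^ j := by rw [h2]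
            _ = A ^ (j + 1) * X ^ (j + 1) := by rw [mul_assoc, ← pow_succ' X j]
            _ = A * X := ih
    refine ⟨?_, ?_, ?_⟩
    · calc X ^ (m + 1) * (A ^ (m + 1)) ^ 2
          = X ^ (m + 1) * A ^ (m + 1 + (m + 1)) := by
            rw [← pow_mul, show (m + 1) * 2 = m + 1 + (m + 1) by omega]
        _ = A ^ (m + 1) := hXA (m + 1)
    · have px : ∀ a b c : ℕ, a + b = c → X ^ a * X ^ b = X ^ c := fun a b c h => by
        rw [← pow_add, h]
      calc A ^ (m + 1) * (X ^ (m + 1)) ^ 2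
          = A ^ (m + 1) * (X ^ (m + 1 + 1) * X ^ m) := by
            rw [← pow_mul, ← px (m + 1 + 1) m ((m + 1) * 2) (by omega)]
        _ = A ^ (m + 1) * X ^ (m + 1 + 1) * X ^ m := by rw [← mul_assoc]
        _ = X * X ^ m := by rw [hAX (m + 1)]
        _ = X ^ (m + 1) := (pow_succ' X m).symm
    · have h4 : E * A ^ (m + 1) * X ^ (m + 1) = E * A * X := by
        rw [mul_assoc, hAXfix m, ← mul_assoc]
      rw [h4]; exact h3
  · -- part (b)
    intro Y h1 h2 h3
    have h1' : Y * A ^ (m + 1 + 1 + m) = A ^ (m + 1) := by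
      rw [show m + 1 + 1 + m = (m + 1) * 2 by omega, pow_mul]
      exact h1
    have e2 : A ^ (m + 1 + m) = A ^ (m + 1 + 1 + m) * S := by
      have := hstep (m + 1 + m) (by omega)
      rw [show m + 1 + m + 1 = m + 1 + 1 + m by omega] at this
      exact this.symm
    refine ⟨?_, ?_, ?_⟩
    · simp only [Nat.add_sub_cancel]
      calc A ^ m * Y * A ^ (m + 1 + 1)
          = A ^ m * Y * (A ^ (m + 1 + 1 + m) * S ^ m) := by
            rw [hiter m (m + 1 + 1) (by omega)]
        _ = A ^ m * (Y * A ^ (m + 1 + 1 + m)) * S ^ m := by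
            rw [← mul_assoc, mul_assoc (A ^ m) Y]
        _ = A ^ m * A ^ (m + 1) * S ^ m := by rw [h1']
        _ = A ^ (m + 1 + m) * S ^ m := by rw [pa m (m + 1) (m + 1 + m) (by omega)]
        _ = A ^ (m + 1) := hiter m (m + 1) le_rfl
    · simp only [Nat.add_sub_cancel]
      have hmy : A ^ m * Y = A ^ (m + 1 + m) * Y ^ 2 := by
        conv_lhs => rw [← h2]
        rw [← mul_assoc, pa m (m + 1) (m + 1 + m) (by omega)]
      calc A * (A ^ m * Y) ^ 2
          = A ^ (m + 1) * (Y * (A ^ m * Y)) := by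
            rw [sq]; simp only [mul_assoc]
            rw [← mul_assoc A (A ^ m), ← pow_succ' A m]
        _ = A ^ (m + 1) * (Y * (A ^ (m + 1 + m) * Y ^ 2)) := by rw [hmy]
        _ = A ^ (m + 1) * (Y * (A ^ (m + 1 + 1 + m) * (S * Y ^ 2))) := by
            rw [e2, mul_assoc]
        _ = A ^ (m + 1) * (Y * A ^ (m + 1 + 1 + m)) * (S * Y ^ 2) := by
            simp only [mul_assoc]
        _ = A ^ (m + 1) * A ^ (m + 1) * (S * Y ^ 2) := by rw [h1']
        _ = A ^ (m + 1 + 1 + m) * S * Y ^ 2 := by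
            rw [pa (m + 1) (m + 1) (m + 1 + 1 + m) (by omega), ← mul_assoc]
        _ = A ^ (m + 1 + m) * Y ^ 2 := by rw [← e2]
        _ = A ^ m * (A ^ (m + 1) * Y ^ 2) := by
            rw [← mul_assoc, pa m (m + 1) (m + 1 + m) (by omega)]
        _ = A ^ m * Y := by rw [h2]
    · simp only [Nat.add_sub_cancel]
      have h4 : E * A * (A ^ m * Y) = E * A ^ (m + 1) * Y := by
        rw [mul_assoc, ← mul_assoc A (A ^ m) Y, ← pow_succ' A m, ← mul_assoc]
      rw [h4]; exact h3
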